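/- Let V : ℝ^d → ℝ be differentiable with ∇V Lipschitz with Lipschitz constant L > 0, and let Φ^t be the Hamiltonian flow of h(q,p) = |p|²/2 + V(q) on ℝ^{2d}, i.e. the solution map of the ODE (q̇, ṗ) = (p, −∇V(q)) with Φ^0 = id. Let ħ > 0, let f : ℝ^{2d} → ℝ be 1-Lipschitz, and let w ∈ L¹(ℝ^{2d}). Then, with e^{ħΔ/4} denoting Gaussian regularization on ℝ^{2d} (convolution with (πħ)^{−d} e^{−|z|²/ħ}), for every t ∈ ℝ one has | ∫_{ℝ^{2d}} ( e^{ħΔ/4}(f ∘ Φ^t) − f ∘ Φ^t )(z) · w(z) dz | ≤ √(dħ) · e^{(1+L)|t|} · ‖w‖_{L¹(ℝ^{2d})}. -/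

import Mathlib

open MeasureTheory
open scoped NNReal

noncomputable section

/-- The phase space `ℝ^d × ℝ^d ≅ ℝ^{2d}`, equipped with the Euclidean (`ℓ²`) norm. -/
abbrev PhaseSpace (d : ℕ) := WithLp 2 (EuclideanSpace ℝ (Fin d) × EuclideanSpace ℝ (Fin d))

instance (d : ℕ) : MeasurableSpace (PhaseSpace d) := borel _
instance (d : ℕ) : BorelSpace (PhaseSpace d) := ⟨rfl⟩

/-- The position component `q` of a phase-space point `z = (q,p)`. -/
def posPart {d : ℕ} (z : PhaseSpace d) : EuclideanSpace ℝ (Fin d) :=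
  (WithLp.equiv 2 (EuclideanSpace ℝ (Fin d) × EuclideanSpace ℝ (Fin d)) z).1

/-- The momentum component `p` of a phase-space point `z = (q,p)`. -/
def momPart {d : ℕ} (z : PhaseSpace d) : EuclideanSpace ℝ (Fin d) :=
  (WithLp.equiv 2 (EuclideanSpace ℝ (Fin d) × EuclideanSpace ℝ (Fin d)) z).2

/-- Build a phase-space point from its position and momentum components. -/
def mkPhase {d : ℕ} (q p : EuclideanSpace ℝ (Fin d)) : PhaseSpace d :=
  (WithLp.equiv 2 (EuclideanSpace ℝ (Fin d) × EuclideanSpace ℝ (Fin d))).symm (q, p)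

set_option maxHeartbeats 4000000
set_option synthInstance.maxHeartbeats 400000

section GaussAux

open Real

variable {E : Type*} [NormedAddCommGroup E] [InnerProductSpace ℝ E]
  [FiniteDimensional ℝ E] [MeasurableSpace E] [BorelSpace E]

lemma aux_int_exp {b : ℝ} (hb : 0 < b) :
    Integrable (fun v : E => rexp (-b * ‖v‖ ^ 2)) := by
  have h := (GaussianFourier.integrable_cexp_neg_mul_sq_norm_add (V := E)
    (b := (b : ℂ)) (by simpa using hb) 0 (0 : E)).norm
  refine h.congr (Filter.Eventually.of_forall fun v => ?_)
  show ‖Complex.exp _‖ = _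
  rw [zero_mul, add_zero]
  have : (-(b:ℂ) * (‖v‖:ℂ) ^ 2) = ((-b * ‖v‖ ^ 2 : ℝ) : ℂ) := by push_cast; ring
  rw [this, Complex.norm_exp_ofReal]

lemma aux_sq_le {b x : ℝ} (hb : 0 < b) :
    x ^ 2 * rexp (-b * x ^ 2) ≤ 2 / b * rexp (-(b/2) * x ^ 2) := by
  have h1 : (b/2) * x ^ 2 ≤ rexp ((b/2) * x ^ 2) := by
    have := Real.add_one_le_exp ((b/2) * x ^ 2); linarith
  have h2 : rexp (-b * x ^ 2) = rexp (-(b/2) * x ^ 2) * rexp (-(b/2) * x ^ 2) := by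
    rw [← Real.exp_add]; ring_nf
  have h3 : x ^ 2 * rexp (-(b/2) * x ^ 2) ≤ 2 / b := by
    rw [show (-(b/2) * x ^ 2) = -((b/2) * x ^2) by ring, Real.exp_neg,
      mul_inv_le_iff₀ (Real.exp_pos _)]
    calc x ^ 2 ≤ (2/b) * ((b/2) * x ^ 2) := by
          rw [show (2/b) * ((b/2) * x ^ 2) = x ^ 2 * (b * b⁻¹) by ring, mul_inv_cancel₀ hb.ne']
          simp
    _ ≤ 2 / b * rexp (b / 2 * x ^ 2) := by
        exact mul_le_mul_of_nonneg_left h1 (by positivity)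
  calc x ^ 2 * rexp (-b * x ^ 2) = (x ^ 2 * rexp (-(b/2) * x ^ 2)) * rexp (-(b/2) * x ^ 2) := by
        rw [h2]; ring
  _ ≤ 2 / b * rexp (-(b/2) * x ^ 2) :=
      mul_le_mul_of_nonneg_right h3 (Real.exp_pos _).le

lemma aux_int_sq_exp {b : ℝ} (hb : 0 < b) :
    Integrable (fun v : E => ‖v‖ ^ 2 * rexp (-b * ‖v‖ ^ 2)) := by
  refine Integrable.mono' ((aux_int_exp (E := E) (half_pos hb)).const_mul (2/b)) ?_
    (Filter.Eventually.of_forall fun v => ?_)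
  · exact (Continuous.aestronglyMeasurable (by fun_prop))
  · rw [Real.norm_of_nonneg (by positivity)]
    exact aux_sq_le hb

lemma aux_int_norm_exp {b : ℝ} (hb : 0 < b) :
    Integrable (fun v : E => ‖v‖ * rexp (-b * ‖v‖ ^ 2)) := by
  refine Integrable.mono'
    (((aux_int_exp (E := E) hb).const_mul (1/2)).add
      ((aux_int_sq_exp (E := E) hb).const_mul (1/2)))
    (Continuous.aestronglyMeasurable (by fun_prop))
    (Filter.Eventually.of_forall fun v => ?_)
  rw [Real.norm_of_nonneg (by positivity)]
  have h : ‖v‖ ≤ 1/2 + 1/2 * ‖v‖ ^ 2 := by nlinarith [sq_nonneg (‖v‖ - 1)]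
  calc ‖v‖ * rexp (-b * ‖v‖ ^ 2) ≤ (1/2 + 1/2 * ‖v‖ ^ 2) * rexp (-b * ‖v‖ ^ 2) :=
        mul_le_mul_of_nonneg_right h (Real.exp_pos _).le
  _ = 1/2 * rexp (-b * ‖v‖ ^ 2) + 1/2 * (‖v‖ ^ 2 * rexp (-b * ‖v‖ ^ 2)) := by ring

lemma aux_moment2 {b : ℝ} (hb : 0 < b) :
    ∫ v : E, ‖v‖ ^ 2 * rexp (-b * ‖v‖ ^ 2)
      = ((Module.finrank ℝ E : ℝ) / (2 * b)) * (π / b) ^ ((Module.finrank ℝ E : ℝ) / 2) := by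
  set c : ℝ := (Module.finrank ℝ E : ℝ) / 2 with hc
  have key : HasDerivAt (fun s : ℝ => ∫ v : E, rexp (-s * ‖v‖ ^ 2))
      (∫ v : E, rexp (-b * ‖v‖ ^ 2) * (-‖v‖ ^ 2)) b := by
    have := hasDerivAt_integral_of_dominated_loc_of_deriv_le
      (F := fun (s : ℝ) (v : E) => rexp (-s * ‖v‖ ^ 2))
      (F' := fun (s : ℝ) (v : E) => rexp (-s * ‖v‖ ^ 2) * (-‖v‖ ^ 2))
      (bound := fun v : E => ‖v‖ ^ 2 * rexp (-(b/2) * ‖v‖ ^ 2))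
      (μ := volume) (x₀ := b) (Metric.ball_mem_nhds b (half_pos hb))
      (Filter.Eventually.of_forall fun s => Continuous.aestronglyMeasurable (by fun_prop))
      (aux_int_exp hb)
      (Continuous.aestronglyMeasurable (by fun_prop))
      (Filter.Eventually.of_forall fun v => fun s hs => ?_)
      (aux_int_sq_exp (half_pos hb))
      (Filter.Eventually.of_forall fun v => fun s hs => ?_)
    · exact this.2
    · have hs2 : b/2 ≤ s := by
        rw [Metric.mem_ball, Real.dist_eq, abs_lt] at hs; linarith
      rw [norm_mul, Real.norm_of_nonneg (Real.exp_pos _).le, norm_neg,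
        Real.norm_of_nonneg (by positivity)]
      calc rexp (-s * ‖v‖ ^ 2) * ‖v‖ ^ 2 = ‖v‖ ^ 2 * rexp (-s * ‖v‖ ^ 2) := mul_comm _ _
      _ ≤ ‖v‖ ^ 2 * rexp (-(b/2) * ‖v‖ ^ 2) :=
          mul_le_mul_of_nonneg_left
            (Real.exp_le_exp.mpr (by nlinarith [sq_nonneg ‖v‖])) (by positivity)
    · have h1 : HasDerivAt (fun s : ℝ => -s * ‖v‖ ^ 2) (-‖v‖ ^ 2) s := by
        simpa using ((hasDerivAt_id s).neg.mul_const (‖v‖ ^ 2))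
      exact h1.exp
  have heq : (fun s : ℝ => ∫ v : E, rexp (-s * ‖v‖ ^ 2))
      =ᶠ[nhds b] (fun s : ℝ => π ^ c * (s ^ c)⁻¹) := by
    filter_upwards [eventually_gt_nhds hb] with s hs
    rw [GaussianFourier.integral_rexp_neg_mul_sq_norm hs, Real.div_rpow pi_pos.le hs.le,
      div_eq_mul_inv]
  have hb_ne : b ^ c ≠ 0 := by positivity
  have key2 : HasDerivAt (fun s : ℝ => π ^ c * (s ^ c)⁻¹)
      (π ^ c * (-(c * b ^ (c - 1)) / (b ^ c) ^ 2)) b :=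
    ((Real.hasDerivAt_rpow_const (x := b) (p := c) (Or.inl hb.ne')).inv hb_ne).const_mul _
  have hder := (heq.hasDerivAt_iff.mpr key2).unique key
  have hneg : ∫ v : E, rexp (-b * ‖v‖ ^ 2) * (-‖v‖ ^ 2)
      = -∫ v : E, ‖v‖ ^ 2 * rexp (-b * ‖v‖ ^ 2) := by
    rw [← integral_neg]; congr 1 with v; ring
  rw [hneg] at hder
  have hval : π ^ c * (-(c * b ^ (c - 1)) / (b ^ c) ^ 2) = -((c / b) * (π / b) ^ c) := by
    have e1 : b ^ (c - 1) = b ^ c / b := by rw [Real.rpow_sub hb, Real.rpow_one]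
    rw [Real.div_rpow pi_pos.le hb.le, e1, pow_two]
    field_simp
  rw [hval] at hder
  have heq2 := neg_injective hder.symm
  rw [heq2, hc]
  ring

end GaussAux

lemma gronwall_aux {E : Type*} [NormedAddCommGroup E] [NormedSpace ℝ E] {g g' : ℝ → E} {K : ℝ}
    (hg : ∀ s, HasDerivAt g (g' s) s) (hb : ∀ s, ‖g' s‖ ≤ K * ‖g s‖) {t : ℝ} (ht : 0 ≤ t) :
    ‖g t‖ ≤ ‖g 0‖ * Real.exp (K * t) := by
  have h := norm_le_gronwallBound_of_norm_deriv_right_le (a := 0) (b := t) (f := g) (f' := g')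
    (δ := ‖g 0‖) (K := K) (ε := 0)
    (fun s _ => (hg s).continuousAt.continuousWithinAt)
    (fun s _ => (hg s).hasDerivWithinAt) le_rfl
    (fun s _ => by simpa using hb s) t ⟨ht, le_rfl⟩
  simpa [gronwallBound_ε0] using h

lemma flow_lipschitz (d : ℕ)
    (V : EuclideanSpace ℝ (Fin d) → ℝ)
    (L : ℝ≥0)
    (hgradLip : LipschitzWith L (gradient V))
    (Φ : ℝ → PhaseSpace d → PhaseSpace d)
    (hΦ₀ : ∀ z, Φ 0 z = z)
    (hΦ : ∀ z t, HasDerivAt (fun s => Φ s z)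
      (mkPhase (momPart (Φ t z)) (-gradient V (posPart (Φ t z)))) t) :
    ∀ (t : ℝ) (z z' : PhaseSpace d),
      ‖Φ t z - Φ t z'‖ ≤ Real.exp ((1 + (L : ℝ)) * |t|) * ‖z - z'‖ := by
  set F : PhaseSpace d → PhaseSpace d :=
    fun y => mkPhase (momPart y) (-gradient V (posPart y)) with hF
  have hL0 : (0 : ℝ) ≤ 1 + (L : ℝ) := by positivity
  have hFlip : ∀ y y' : PhaseSpace d, ‖F y - F y'‖ ≤ (1 + (L : ℝ)) * ‖y - y'‖ := by
    intro y y'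
    have hfst : (F y - F y').fst = momPart y - momPart y' := rfl
    have hsnd : (F y - F y').snd = -(gradient V (posPart y) - gradient V (posPart y')) := by
      show -gradient V (posPart y) - -gradient V (posPart y') = _; abel
    have hgrad : ‖gradient V (posPart y) - gradient V (posPart y')‖
        ≤ (L : ℝ) * ‖posPart y - posPart y'‖ := by
      have := hgradLip.dist_le_mul (posPart y) (posPart y')
      simpa [dist_eq_norm] using this
    have hy1 : (y - y').fst = posPart y - posPart y' := rfl
    have hy2 : (y - y').snd = momPart y - momPart y' := rfl
    have e1 := WithLp.prod_norm_sq_eq_of_L2 (F y - F y')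
    have e2 := WithLp.prod_norm_sq_eq_of_L2 (y - y')
    rw [hfst, hsnd, norm_neg] at e1
    rw [hy1, hy2] at e2
    have h2 : ‖gradient V (posPart y) - gradient V (posPart y')‖ ^ 2
        ≤ ((L : ℝ) * ‖posPart y - posPart y'‖) ^ 2 :=
      pow_le_pow_left₀ (norm_nonneg _) hgrad 2
    have h1 : ‖F y - F y'‖ ^ 2 ≤ ((1 + (L : ℝ)) * ‖y - y'‖) ^ 2 := by
      rw [e1, mul_pow, e2]
      have hc1 : (1:ℝ) ≤ (1 + (L:ℝ))^2 := by nlinarith [L.coe_nonneg]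
      have hc2 : ((L:ℝ))^2 ≤ (1 + (L:ℝ))^2 := by nlinarith [L.coe_nonneg]
      rw [mul_pow] at h2
      nlinarith [mul_le_mul_of_nonneg_right hc2 (sq_nonneg ‖posPart y - posPart y'‖),
        mul_le_mul_of_nonneg_right hc1 (sq_nonneg ‖momPart y - momPart y'‖), h2]
    have h3 := Real.sqrt_le_sqrt h1
    rwa [Real.sqrt_sq (norm_nonneg _), Real.sqrt_sq (by positivity)] at h3
  intro t z z'
  rcases le_total 0 t with ht | ht
  · have h := gronwall_aux (g := fun s => Φ s z - Φ s z')
      (g' := fun s => F (Φ s z) - F (Φ s z')) (K := 1 + (L : ℝ))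
      (fun s => (hΦ z s).sub (hΦ z' s))
      (fun s => hFlip _ _) ht
    have h' : ‖Φ t z - Φ t z'‖ ≤ ‖z - z'‖ * Real.exp ((1 + (L:ℝ)) * t) := by
      simpa [hΦ₀] using h
    rw [abs_of_nonneg ht]
    calc ‖Φ t z - Φ t z'‖ ≤ ‖z - z'‖ * Real.exp ((1 + (L:ℝ)) * t) := h'
    _ = Real.exp ((1 + (L:ℝ)) * t) * ‖z - z'‖ := mul_comm _ _
  · have hders : ∀ s, HasDerivAt (fun s => Φ (-s) z - Φ (-s) z')
        (F (Φ (-s) z') - F (Φ (-s) z)) s := by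
      intro s
      have h1 : HasDerivAt (fun s : ℝ => Φ (-s) z) (-(F (Φ (-s) z))) s := by
        have := (hΦ z (-s)).scomp s (hasDerivAt_neg s)
        simp at this; exact this
      have h2 : HasDerivAt (fun s : ℝ => Φ (-s) z') (-(F (Φ (-s) z'))) s := by
        have := (hΦ z' (-s)).scomp s (hasDerivAt_neg s)
        simp at this; exact this
      have h3 := h1.sub h2
      have : -F (Φ (-s) z) - -F (Φ (-s) z') = F (Φ (-s) z') - F (Φ (-s) z) := by abel
      rw [this] at h3
      exact h3
    have h := gronwall_aux (g := fun s => Φ (-s) z - Φ (-s) z')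
      (g' := fun s => F (Φ (-s) z') - F (Φ (-s) z)) (K := 1 + (L : ℝ))
      hders (fun s => (hFlip (Φ (-s) z') (Φ (-s) z)).trans_eq (by rw [norm_sub_rev]))
      (t := -t) (neg_nonneg.mpr ht)
    have h' : ‖Φ t z - Φ t z'‖ ≤ ‖z - z'‖ * Real.exp ((1 + (L:ℝ)) * -t) := by
      simpa [hΦ₀] using h
    rw [abs_of_nonpos ht]
    calc ‖Φ t z - Φ t z'‖ ≤ ‖z - z'‖ * Real.exp ((1 + (L:ℝ)) * -t) := h'
    _ = Real.exp ((1 + (L:ℝ)) * -t) * ‖z - z'‖ := mul_comm _ _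

/-- Let `V : ℝ^d → ℝ` be differentiable with `∇V` Lipschitz with
constant `L > 0` and `Φ^t` the Hamiltonian flow of `h(q,p) = |p|²/2 + V(q)`. Let
`hbar > 0`, `f : ℝ^{2d} → ℝ` `1`-Lipschitz and `w ∈ L¹(ℝ^{2d})`. With `e^{hbar Δ/4}` the
Gaussian regularization on `ℝ^{2d}` (convolution with `(π hbar)^{−d} e^{−|z|²/hbar}`), for
every `t` one has
`|∫ (e^{hbar Δ/4}(f∘Φ^t) − f∘Φ^t) w| ≤ √(d hbar) e^{(1+L)|t|} ‖w‖_{L¹}`. -/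
theorem gaussian_reg_flow_pairing_bound
    (d : ℕ)
    (V : EuclideanSpace ℝ (Fin d) → ℝ)
    (hV : Differentiable ℝ V)
    (L : ℝ≥0) (hL : 0 < L)
    (hgradLip : LipschitzWith L (gradient V))
    (Φ : ℝ → PhaseSpace d → PhaseSpace d)
    (hΦ₀ : ∀ z, Φ 0 z = z)
    (hΦ : ∀ z t, HasDerivAt (fun s => Φ s z)
      (mkPhase (momPart (Φ t z)) (-gradient V (posPart (Φ t z)))) t)
    (hbar : ℝ) (hhbar : 0 < hbar)
    (f : PhaseSpace d → ℝ) (hf : LipschitzWith 1 f)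
    (w : PhaseSpace d → ℝ)
    (hw : Integrable w (volume : Measure (PhaseSpace d))) :
    ∀ t : ℝ,
      |∫ z : PhaseSpace d,
          ((Real.pi * hbar) ^ (-(d : ℝ)) *
              (∫ z' : PhaseSpace d, Real.exp (-‖z - z'‖ ^ 2 / hbar) * f (Φ t z'))
            - f (Φ t z)) * w z|
        ≤ Real.sqrt ((d : ℝ) * hbar) * Real.exp ((1 + (L : ℝ)) * |t|) *
            ∫ z : PhaseSpace d, |w z| := by
  intro t
  set b : ℝ := hbar⁻¹ with hbdef
  have hb : 0 < b := inv_pos.mpr hhbar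
  set K : ℝ := Real.exp ((1 + (L : ℝ)) * |t|) with hKdef
  have hK0 : 0 < K := Real.exp_pos _
  set g : PhaseSpace d → ℝ := fun z => f (Φ t z) with hgdef
  set c : ℝ := (Real.pi * hbar) ^ (-(d : ℝ)) with hcdef
  have hπh : 0 < Real.pi * hbar := mul_pos Real.pi_pos hhbar
  have hc : 0 < c := Real.rpow_pos_of_pos hπh _
  -- the kernel rewrite
  have hker : ∀ x : ℝ, -x / hbar = -b * x := fun x => by
    rw [hbdef, div_eq_mul_inv, neg_mul, neg_mul, mul_comm]
  -- Lipschitz bound for g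
  have hLipg : ∀ z z', |g z - g z'| ≤ K * ‖z - z'‖ := by
    intro z z'
    have h1 := hf.dist_le_mul (Φ t z) (Φ t z')
    rw [Real.dist_eq, dist_eq_norm, NNReal.coe_one, one_mul] at h1
    calc |g z - g z'| ≤ ‖Φ t z - Φ t z'‖ := h1
    _ ≤ K * ‖z - z'‖ := flow_lipschitz d V L hgradLip Φ hΦ₀ hΦ t z z'
  have hgcont : Continuous g := by
    refine LipschitzWith.continuous (K := Real.toNNReal K) ?_
    refine LipschitzWith.of_dist_le_mul fun z z' => ?_
    rw [Real.dist_eq, dist_eq_norm, Real.coe_toNNReal K hK0.le]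
    exact hLipg z z'
  -- finrank of the phase space
  have hrank : (Module.finrank ℝ (PhaseSpace d) : ℝ) = 2 * d := by
    have e := WithLp.linearEquiv 2 ℝ (EuclideanSpace ℝ (Fin d) × EuclideanSpace ℝ (Fin d))
    rw [e.finrank_eq, Module.finrank_prod, finrank_euclideanSpace_fin]
    push_cast; ring
  have hπb : Real.pi / b = Real.pi * hbar := by
    rw [hbdef, div_inv_eq_mul]
  -- the Gaussian moments
  have hM0 : ∫ u : PhaseSpace d, Real.exp (-b * ‖u‖ ^ 2) = (Real.pi * hbar) ^ (d : ℝ) := by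
    rw [GaussianFourier.integral_rexp_neg_mul_sq_norm hb, hπb]
    congr 1
    rw [hrank]; ring
  have hM2 : ∫ u : PhaseSpace d, ‖u‖ ^ 2 * Real.exp (-b * ‖u‖ ^ 2)
      = ((d : ℝ) * hbar) * (Real.pi * hbar) ^ (d : ℝ) := by
    rw [aux_moment2 hb, hπb]
    have h2 : ((Module.finrank ℝ (PhaseSpace d) : ℝ) / 2) = (d : ℝ) := by rw [hrank]; ring
    rw [h2]
    congr 1
    rw [hrank, hbdef]
    field_simp
  have hcM0 : c * (Real.pi * hbar) ^ (d : ℝ) = 1 := by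
    rw [hcdef, ← Real.rpow_add hπh, neg_add_cancel, Real.rpow_zero]
  -- first-moment bound
  have hM1 : ∫ u : PhaseSpace d, ‖u‖ * Real.exp (-b * ‖u‖ ^ 2)
      ≤ Real.sqrt ((d : ℝ) * hbar) * (Real.pi * hbar) ^ (d : ℝ) := by
    by_cases hd : d = 0
    · subst hd
      have h0 : ∀ u : PhaseSpace 0, ‖u‖ = 0 := by
        intro u
        have e := WithLp.prod_norm_sq_eq_of_L2 u
        have h1 : ‖u.fst‖ = 0 := by rw [EuclideanSpace.norm_eq]; simp
        have h2 : ‖u.snd‖ = 0 := by rw [EuclideanSpace.norm_eq]; simp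
        have h3 : ‖u‖ ^ 2 = 0 := by rw [e, h1, h2]; ring
        exact pow_eq_zero_iff two_ne_zero |>.mp h3
      have : ∫ u : PhaseSpace 0, ‖u‖ * Real.exp (-b * ‖u‖ ^ 2) = 0 := by
        rw [← integral_zero (PhaseSpace 0) ℝ]
        congr 1 with u
        rw [h0 u]; ring
      rw [this]
      positivity
    · set a : ℝ := Real.sqrt ((d : ℝ) * hbar) with hadef
      have hd0 : (0:ℝ) < (d:ℝ) := by
        exact_mod_cast Nat.pos_of_ne_zero hd
      have ha : 0 < a := Real.sqrt_pos.mpr (by positivity)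
      have ha2 : a ^ 2 = (d : ℝ) * hbar := Real.sq_sqrt (by positivity)
      have hpt : ∀ u : PhaseSpace d, ‖u‖ * Real.exp (-b * ‖u‖ ^ 2)
          ≤ a/2 * Real.exp (-b * ‖u‖ ^ 2) + 1/(2*a) * (‖u‖ ^ 2 * Real.exp (-b * ‖u‖ ^ 2)) := by
        intro u
        have h1 : ‖u‖ ≤ a/2 + 1/(2*a) * ‖u‖ ^ 2 := by
          rw [← sub_nonneg]
          have he : a/2 + 1/(2*a) * ‖u‖ ^ 2 - ‖u‖ = (‖u‖ - a)^2 / (2*a) := by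
            field_simp; ring
          rw [he]; positivity
        calc ‖u‖ * Real.exp (-b * ‖u‖ ^ 2)
            ≤ (a/2 + 1/(2*a) * ‖u‖ ^ 2) * Real.exp (-b * ‖u‖ ^ 2) :=
              mul_le_mul_of_nonneg_right h1 (Real.exp_pos _).le
        _ = a/2 * Real.exp (-b * ‖u‖ ^ 2) + 1/(2*a) * (‖u‖ ^ 2 * Real.exp (-b * ‖u‖ ^ 2)) := by
              ring
      calc ∫ u : PhaseSpace d, ‖u‖ * Real.exp (-b * ‖u‖ ^ 2)
          ≤ ∫ u : PhaseSpace d, (a/2 * Real.exp (-b * ‖u‖ ^ 2)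
              + 1/(2*a) * (‖u‖ ^ 2 * Real.exp (-b * ‖u‖ ^ 2))) :=
            integral_mono (aux_int_norm_exp hb)
              (((aux_int_exp hb).const_mul (a/2)).add
                ((aux_int_sq_exp hb).const_mul (1/(2*a)))) hpt
      _ = a/2 * (∫ u : PhaseSpace d, Real.exp (-b * ‖u‖ ^ 2))
            + 1/(2*a) * ∫ u : PhaseSpace d, ‖u‖ ^ 2 * Real.exp (-b * ‖u‖ ^ 2) := by
            rw [integral_add ((aux_int_exp hb).const_mul (a/2))
              ((aux_int_sq_exp hb).const_mul (1/(2*a))), integral_const_mul, integral_const_mul]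
      _ = a * (Real.pi * hbar) ^ (d : ℝ) := by
            rw [hM0, hM2, ← ha2]
            field_simp
            ring
  -- integrability of the convolution integrand
  have hcont_ker : Continuous fun u : PhaseSpace d => Real.exp (-b * ‖u‖ ^ 2) := by fun_prop
  have hint_g : ∀ z : PhaseSpace d,
      Integrable (fun u : PhaseSpace d => Real.exp (-b * ‖u‖ ^ 2) * g (z + u)) := by
    intro z
    refine Integrable.mono'
      (((aux_int_exp hb).const_mul |g z|).add ((aux_int_norm_exp hb).const_mul K))
      (Continuous.aestronglyMeasurable
        (hcont_ker.mul (hgcont.comp (continuous_const.add continuous_id))))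
      (Filter.Eventually.of_forall fun u => ?_)
    have h2 := hLipg (z + u) z
    rw [show (z + u) - z = u by abel] at h2
    have h1 : |g (z + u)| ≤ |g z| + K * ‖u‖ := by
      calc |g (z + u)| = |g z + (g (z + u) - g z)| := by ring_nf
      _ ≤ |g z| + |g (z + u) - g z| := abs_add_le _ _
      _ ≤ |g z| + K * ‖u‖ := by linarith
    calc ‖Real.exp (-b * ‖u‖ ^ 2) * g (z + u)‖
        = Real.exp (-b * ‖u‖ ^ 2) * |g (z + u)| := by
          rw [Real.norm_eq_abs, abs_mul, abs_of_pos (Real.exp_pos _)]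
    _ ≤ Real.exp (-b * ‖u‖ ^ 2) * (|g z| + K * ‖u‖) :=
          mul_le_mul_of_nonneg_left h1 (Real.exp_pos _).le
    _ = |g z| * Real.exp (-b * ‖u‖ ^ 2) + K * (‖u‖ * Real.exp (-b * ‖u‖ ^ 2)) := by ring
  -- change of variables
  have hcov : ∀ z : PhaseSpace d,
      (∫ z' : PhaseSpace d, Real.exp (-‖z - z'‖ ^ 2 / hbar) * g z')
        = ∫ u : PhaseSpace d, Real.exp (-b * ‖u‖ ^ 2) * g (z + u) := by
    intro z
    calc (∫ z' : PhaseSpace d, Real.exp (-‖z - z'‖ ^ 2 / hbar) * g z')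
        = ∫ z' : PhaseSpace d,
            (fun u : PhaseSpace d => Real.exp (-b * ‖u‖ ^ 2) * g (z + u)) (z' - z) := by
          congr 1 with z'
          simp only
          rw [hker, norm_sub_rev z z', show z + (z' - z) = z' by abel]
    _ = ∫ u : PhaseSpace d, Real.exp (-b * ‖u‖ ^ 2) * g (z + u) :=
          integral_sub_right_eq_self
            (fun u : PhaseSpace d => Real.exp (-b * ‖u‖ ^ 2) * g (z + u)) z
  -- difference representation
  have hAdiff : ∀ z : PhaseSpace d,
      c * (∫ z' : PhaseSpace d, Real.exp (-‖z - z'‖ ^ 2 / hbar) * g z') - g z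
        = c * ∫ u : PhaseSpace d, Real.exp (-b * ‖u‖ ^ 2) * (g (z + u) - g z) := by
    intro z
    have h1 : ∫ u : PhaseSpace d, Real.exp (-b * ‖u‖ ^ 2) * (g (z + u) - g z)
        = (∫ u : PhaseSpace d, Real.exp (-b * ‖u‖ ^ 2) * g (z + u))
          - (∫ u : PhaseSpace d, Real.exp (-b * ‖u‖ ^ 2)) * g z := by
      simp_rw [mul_sub]
      rw [integral_sub (hint_g z) ((aux_int_exp hb).mul_const (g z)), integral_mul_const]
    rw [h1, hcov z, mul_sub, hM0, ← mul_assoc, hcM0, one_mul]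
  -- pointwise bound
  have hpoint : ∀ z : PhaseSpace d,
      |c * (∫ z' : PhaseSpace d, Real.exp (-‖z - z'‖ ^ 2 / hbar) * g z') - g z|
        ≤ Real.sqrt ((d : ℝ) * hbar) * K := by
    intro z
    rw [hAdiff z, abs_mul, abs_of_pos hc]
    have h1 : ‖∫ u : PhaseSpace d, Real.exp (-b * ‖u‖ ^ 2) * (g (z + u) - g z)‖
        ≤ ∫ u : PhaseSpace d, K * (‖u‖ * Real.exp (-b * ‖u‖ ^ 2)) := by
      refine norm_integral_le_of_norm_le ((aux_int_norm_exp hb).const_mul K)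
        (Filter.Eventually.of_forall fun u => ?_)
      have h2 := hLipg (z + u) z
      rw [show (z + u) - z = u by abel] at h2
      calc ‖Real.exp (-b * ‖u‖ ^ 2) * (g (z + u) - g z)‖
          = Real.exp (-b * ‖u‖ ^ 2) * |g (z + u) - g z| := by
            rw [Real.norm_eq_abs, abs_mul, abs_of_pos (Real.exp_pos _)]
      _ ≤ Real.exp (-b * ‖u‖ ^ 2) * (K * ‖u‖) :=
            mul_le_mul_of_nonneg_left h2 (Real.exp_pos _).le
      _ = K * (‖u‖ * Real.exp (-b * ‖u‖ ^ 2)) := by ring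
    rw [integral_const_mul] at h1
    have h3 : |∫ u : PhaseSpace d, Real.exp (-b * ‖u‖ ^ 2) * (g (z + u) - g z)|
        ≤ K * (Real.sqrt ((d : ℝ) * hbar) * (Real.pi * hbar) ^ (d : ℝ)) := by
      rw [← Real.norm_eq_abs]
      exact h1.trans (mul_le_mul_of_nonneg_left hM1 hK0.le)
    calc c * |∫ u : PhaseSpace d, Real.exp (-b * ‖u‖ ^ 2) * (g (z + u) - g z)|
        ≤ c * (K * (Real.sqrt ((d : ℝ) * hbar) * (Real.pi * hbar) ^ (d : ℝ))) :=
          mul_le_mul_of_nonneg_left h3 hc.le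
    _ = Real.sqrt ((d : ℝ) * hbar) * K * (c * (Real.pi * hbar) ^ (d : ℝ)) := by ring
    _ = Real.sqrt ((d : ℝ) * hbar) * K := by rw [hcM0, mul_one]
  -- continuity of the regularized function
  have hAcont : Continuous fun z : PhaseSpace d =>
      ∫ z' : PhaseSpace d, Real.exp (-‖z - z'‖ ^ 2 / hbar) * g z' := by
    have hfe : (fun z : PhaseSpace d => ∫ z' : PhaseSpace d, Real.exp (-‖z - z'‖ ^ 2 / hbar) * g z')
        = fun z : PhaseSpace d => ∫ u : PhaseSpace d, Real.exp (-b * ‖u‖ ^ 2) * g (z + u) :=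
      funext hcov
    rw [hfe]
    have hM0nn : (0:ℝ) ≤ K * (Real.pi * hbar) ^ (d : ℝ) := by positivity
    refine LipschitzWith.continuous (K := Real.toNNReal (K * (Real.pi * hbar) ^ (d : ℝ)))
      (LipschitzWith.of_dist_le_mul fun z z'' => ?_)
    rw [Real.dist_eq, dist_eq_norm, Real.coe_toNNReal _ hM0nn]
    have h1 : (∫ u : PhaseSpace d, Real.exp (-b * ‖u‖ ^ 2) * g (z + u))
        - (∫ u : PhaseSpace d, Real.exp (-b * ‖u‖ ^ 2) * g (z'' + u))
        = ∫ u : PhaseSpace d, Real.exp (-b * ‖u‖ ^ 2) * (g (z + u) - g (z'' + u)) := by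
      simp_rw [mul_sub]
      rw [integral_sub (hint_g z) (hint_g z'')]
    rw [h1]
    have h2 : ‖∫ u : PhaseSpace d, Real.exp (-b * ‖u‖ ^ 2) * (g (z + u) - g (z'' + u))‖
        ≤ ∫ u : PhaseSpace d, (K * ‖z - z''‖) * Real.exp (-b * ‖u‖ ^ 2) := by
      refine norm_integral_le_of_norm_le ((aux_int_exp hb).const_mul _)
        (Filter.Eventually.of_forall fun u => ?_)
      have h3 := hLipg (z + u) (z'' + u)
      rw [show (z + u) - (z'' + u) = z - z'' by abel] at h3
      calc ‖Real.exp (-b * ‖u‖ ^ 2) * (g (z + u) - g (z'' + u))‖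
          = Real.exp (-b * ‖u‖ ^ 2) * |g (z + u) - g (z'' + u)| := by
            rw [Real.norm_eq_abs, abs_mul, abs_of_pos (Real.exp_pos _)]
      _ ≤ Real.exp (-b * ‖u‖ ^ 2) * (K * ‖z - z''‖) :=
            mul_le_mul_of_nonneg_left h3 (Real.exp_pos _).le
      _ = (K * ‖z - z''‖) * Real.exp (-b * ‖u‖ ^ 2) := by ring
    rw [Real.norm_eq_abs] at h2
    calc |∫ u : PhaseSpace d, Real.exp (-b * ‖u‖ ^ 2) * (g (z + u) - g (z'' + u))|
        ≤ ∫ u : PhaseSpace d, (K * ‖z - z''‖) * Real.exp (-b * ‖u‖ ^ 2) := h2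
    _ = (K * ‖z - z''‖) * (Real.pi * hbar) ^ (d : ℝ) := by rw [integral_const_mul, hM0]
    _ = K * (Real.pi * hbar) ^ (d : ℝ) * ‖z - z''‖ := by ring
  -- put everything together
  have hφcont : Continuous fun z : PhaseSpace d =>
      c * (∫ z' : PhaseSpace d, Real.exp (-‖z - z'‖ ^ 2 / hbar) * g z') - g z :=
    (continuous_const.mul hAcont).sub hgcont
  have hφw : Integrable (fun z : PhaseSpace d =>
      (c * (∫ z' : PhaseSpace d, Real.exp (-‖z - z'‖ ^ 2 / hbar) * g z') - g z) * w z) :=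
    hw.bdd_mul (c := Real.sqrt ((d : ℝ) * hbar) * K) hφcont.aestronglyMeasurable
      (Filter.Eventually.of_forall fun z => by rw [Real.norm_eq_abs]; exact hpoint z)
  have hgoal : ∀ z : PhaseSpace d, f (Φ t z) = g z := fun _ => rfl
  simp only [hgoal]
  calc |∫ z : PhaseSpace d,
        (c * (∫ z' : PhaseSpace d, Real.exp (-‖z - z'‖ ^ 2 / hbar) * g z') - g z) * w z|
      ≤ ∫ z : PhaseSpace d,
        |(c * (∫ z' : PhaseSpace d, Real.exp (-‖z - z'‖ ^ 2 / hbar) * g z') - g z) * w z| := by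
        have := norm_integral_le_integral_norm (μ := (volume : Measure (PhaseSpace d)))
          (f := fun z : PhaseSpace d =>
            (c * (∫ z' : PhaseSpace d, Real.exp (-‖z - z'‖ ^ 2 / hbar) * g z') - g z) * w z)
        simpa only [Real.norm_eq_abs] using this
  _ ≤ ∫ z : PhaseSpace d, (Real.sqrt ((d : ℝ) * hbar) * K) * |w z| := by
        refine integral_mono hφw.abs ((hw.abs.const_mul _)) fun z => ?_
        rw [abs_mul]
        exact mul_le_mul_of_nonneg_right (hpoint z) (abs_nonneg _)
  _ = Real.sqrt ((d : ℝ) * hbar) * K * ∫ z : PhaseSpace d, |w z| := integral_const_mul _ _
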